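/- For every temporal fair division instance with identical days, there exists an allocation A of M that is SD-EF1 per day and SD-PROP1 overall. -/
import Mathlib


open Finset
open scoped Classical

noncomputable section

/-- `A` is an allocation of the set of goods `S` among `n` agents. -/
def IsAlloc {G : Type*} (n : ℕ) (S : Finset G) (A : Fin n → Finset G) : Prop :=
  (∀ i j : Fin n, i ≠ j → Disjoint (A i) (A j)) ∧ Finset.univ.biUnion A = S

/-- The top-set `H_i(S,g) = {g' ∈ S : v g' ≥ v g}`. -/
def topSet {G : Type*} (v : G → ℝ) (S : Finset G) (g : G) : Finset G :=
  S.filter (fun g' => v g ≤ v g')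

/-- Stochastic dominance: `X ≽^SD Y` w.r.t. valuation `v` over the set of goods `S`. -/
def SDge {G : Type*} [DecidableEq G] (v : G → ℝ) (S X Y : Finset G) : Prop :=
  ∀ g ∈ S, (Y ∩ topSet v S g).card ≤ (X ∩ topSet v S g).card

/-- The allocation `A` of goods `S` is SD-EF1. -/
def SDEF1 {G : Type*} [DecidableEq G] (n : ℕ) (v : Fin n → G → ℝ) (S : Finset G)
    (A : Fin n → Finset G) : Prop :=
  ∀ i j : Fin n, A j ≠ ∅ → ∃ g ∈ A j, SDge (v i) S (A i) ((A j).erase g)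

/-- The allocation `A` of goods `S` is SD-PROP1: every agent `i` with `A i ≠ S` has a good
`g ∈ S \ A i` such that `|(A i ∪ {g}) ∩ H_i(S,g')| ≥ ⌈|H_i(S,g')| / n⌉` for all `g' ∈ S`. -/
def SDPROP1 {G : Type*} [DecidableEq G] (n : ℕ) (v : Fin n → G → ℝ) (S : Finset G)
    (A : Fin n → Finset G) : Prop :=
  ∀ i : Fin n, A i ≠ S → ∃ g ∈ S \ A i, ∀ g' ∈ S,
    Nat.ceil (((topSet (v i) S g').card : ℚ) / n) ≤ ((insert g (A i)) ∩ topSet (v i) S g').card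

namespace TFD
variable {G : Type*} [DecidableEq G]

noncomputable def pick (v : G → ℝ) (S : Finset G) (hS : S.Nonempty) : G :=
  (S.exists_max_image v hS).choose

lemma pick_mem (v : G → ℝ) (S : Finset G) (hS : S.Nonempty) : pick v S hS ∈ S :=
  (S.exists_max_image v hS).choose_spec.1

lemma pick_max (v : G → ℝ) (S : Finset G) (hS : S.Nonempty) :
    ∀ b ∈ S, v b ≤ v (pick v S hS) :=
  (S.exists_max_image v hS).choose_spec.2

noncomputable def rr (n : ℕ) (v : Fin n → G → ℝ) (ord : ℕ → Fin n) (j : ℕ) (S : Finset G) :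
    Fin n → Finset G :=
  if hS : S.Nonempty then
    fun i =>
      if i = ord j then
        insert (pick (v (ord j)) S hS)
          (rr n v ord (j+1) (S.erase (pick (v (ord j)) S hS)) i)
      else rr n v ord (j+1) (S.erase (pick (v (ord j)) S hS)) i
  else fun _ => ∅
termination_by S.card
decreasing_by all_goals exact Finset.card_erase_lt_of_mem (pick_mem _ _ _)

lemma rr_empty (n : ℕ) (v : Fin n → G → ℝ) (ord : ℕ → Fin n) (j : ℕ) (i : Fin n) :
    rr n v ord j ∅ i = ∅ := by rw [rr]; simp

lemma rr_eq_of_nonempty (n : ℕ) (v : Fin n → G → ℝ) (ord : ℕ → Fin n) (j : ℕ) (S : Finset G)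
    (hS : S.Nonempty) (i : Fin n) :
    rr n v ord j S i =
      if i = ord j then
        insert (pick (v (ord j)) S hS)
          (rr n v ord (j+1) (S.erase (pick (v (ord j)) S hS)) i)
      else rr n v ord (j+1) (S.erase (pick (v (ord j)) S hS)) i := by
  rw [rr]; simp [hS]

lemma rr_subset (n : ℕ) (v : Fin n → G → ℝ) (ord : ℕ → Fin n) :
    ∀ (S : Finset G) (j : ℕ) (i : Fin n), rr n v ord j S i ⊆ S := by
  intro S
  induction S using Finset.strongInduction with
  | _ S ih =>
    intro j i
    by_cases hS : S.Nonempty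
    · set g := pick (v (ord j)) S hS with hg
      have hsub : rr n v ord (j+1) (S.erase g) i ⊆ S.erase g :=
        ih (S.erase g) (Finset.erase_ssubset (pick_mem _ _ _)) (j+1) i
      rw [rr_eq_of_nonempty n v ord j S hS]
      split
      · exact Finset.insert_subset_iff.2 ⟨pick_mem _ _ _,
          hsub.trans (Finset.erase_subset _ _)⟩
      · exact hsub.trans (Finset.erase_subset _ _)
    · rw [Finset.not_nonempty_iff_eq_empty] at hS
      subst hS; rw [rr_empty]

lemma rr_disjoint (n : ℕ) (v : Fin n → G → ℝ) (ord : ℕ → Fin n) :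
    ∀ (S : Finset G) (j : ℕ) (i i' : Fin n), i ≠ i' →
      Disjoint (rr n v ord j S i) (rr n v ord j S i') := by
  intro S
  induction S using Finset.strongInduction with
  | _ S ih =>
    intro j i i' hne
    by_cases hS : S.Nonempty
    · set g := pick (v (ord j)) S hS with hg
      have hd := ih (S.erase g) (Finset.erase_ssubset (pick_mem _ _ _)) (j+1) i i' hne
      have hgi : g ∉ rr n v ord (j+1) (S.erase g) i :=
        fun h => (Finset.notMem_erase g S) (rr_subset n v ord _ _ _ h)
      have hgi' : g ∉ rr n v ord (j+1) (S.erase g) i' :=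
        fun h => (Finset.notMem_erase g S) (rr_subset n v ord _ _ _ h)
      rw [rr_eq_of_nonempty n v ord j S hS, rr_eq_of_nonempty n v ord j S hS]
      split <;> split
      · next h1 h2 => exact absurd (h1.trans h2.symm) hne
      · next h1 h2 =>
          rw [Finset.disjoint_insert_left]
          exact ⟨hgi', hd⟩
      · next h1 h2 =>
          rw [Finset.disjoint_insert_right]
          exact ⟨hgi, hd⟩
      · exact hd
    · rw [Finset.not_nonempty_iff_eq_empty] at hS
      subst hS; rw [rr_empty]; exact Finset.disjoint_empty_left _

lemma rr_union (n : ℕ) (v : Fin n → G → ℝ) (ord : ℕ → Fin n) (hn : 0 < n) :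
    ∀ (S : Finset G) (j : ℕ), Finset.univ.biUnion (rr n v ord j S) = S := by
  intro S
  induction S using Finset.strongInduction with
  | _ S ih =>
    intro j
    by_cases hS : S.Nonempty
    · set g := pick (v (ord j)) S hS with hg
      have hIH := ih (S.erase g) (Finset.erase_ssubset (pick_mem _ _ _)) (j+1)
      ext x
      simp only [Finset.mem_biUnion, Finset.mem_univ, true_and]
      constructor
      · rintro ⟨i, hi⟩
        rw [rr_eq_of_nonempty n v ord j S hS] at hi
        by_cases hio : i = ord j
        · rw [if_pos hio] at hi
          rcases Finset.mem_insert.1 hi with h | h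
          · exact h ▸ pick_mem _ _ _
          · exact Finset.erase_subset _ _ (rr_subset n v ord _ _ _ h)
        · rw [if_neg hio] at hi
          exact Finset.erase_subset _ _ (rr_subset n v ord _ _ _ hi)
      · intro hx
        by_cases hxg : x = g
        · refine ⟨ord j, ?_⟩
          rw [rr_eq_of_nonempty n v ord j S hS, if_pos rfl]
          exact hxg ▸ Finset.mem_insert_self _ _
        · have : x ∈ S.erase g := Finset.mem_erase.2 ⟨hxg, hx⟩
          rw [← hIH] at this
          simp only [Finset.mem_biUnion, Finset.mem_univ, true_and] at this
          rcases this with ⟨i, hi⟩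
          refine ⟨i, ?_⟩
          rw [rr_eq_of_nonempty n v ord j S hS]
          split
          · exact Finset.mem_insert_of_mem hi
          · exact hi
    · rw [Finset.not_nonempty_iff_eq_empty] at hS
      subst hS
      ext x
      simp [rr_empty]
/-- Number of indices `d < x` at which `ord (j+d) = i`. -/
def cnt (n : ℕ) (ord : ℕ → Fin n) (j x : ℕ) (i : Fin n) : ℕ :=
  ((Finset.range x).filter (fun d => ord (j + d) = i)).card

lemma cnt_top (n : ℕ) (ord : ℕ → Fin n) (j x : ℕ) (i : Fin n) :
    cnt n ord j (x+1) i = cnt n ord j x i + (if ord (j + x) = i then 1 else 0) := by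
  unfold cnt
  rw [Finset.range_add_one, Finset.filter_insert]
  split
  · rw [Finset.card_insert_of_notMem (by simp)]
  · rfl

lemma cnt_succ (n : ℕ) (ord : ℕ → Fin n) (i : Fin n) :
    ∀ x j, cnt n ord j (x+1) i = (if ord j = i then 1 else 0) + cnt n ord (j+1) x i := by
  intro x
  induction x with
  | zero =>
      intro j
      unfold cnt
      rw [Finset.range_one]
      by_cases h : ord j = i <;> simp [Finset.filter_singleton, h]
  | succ x ihx =>
      intro j
      rw [cnt_top, ihx j, cnt_top]
      have : j + (x+1) = (j+1) + x := by omega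
      rw [this]
      ring

lemma cnt_mono (n : ℕ) (ord : ℕ → Fin n) (j : ℕ) (i : Fin n) {x x' : ℕ} (h : x ≤ x') :
    cnt n ord j x i ≤ cnt n ord j x' i :=
  Finset.card_le_card (Finset.filter_subset_filter _ (Finset.range_subset_range.2 h))

/-- `T` is an up-closed subset w.r.t. valuation `v` inside `S`. -/
def upc (v : G → ℝ) (S T : Finset G) : Prop :=
  ∀ x ∈ T, ∀ y ∈ S, y ∉ T → v y < v x

lemma upc_erase (v : G → ℝ) (S T : Finset G) (h : upc v S T) (g : G) :
    upc v (S.erase g) (T.erase g) := by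
  intro x hx y hy hyT
  exact h x (Finset.mem_of_mem_erase hx) y (Finset.mem_of_mem_erase hy)
    (fun hT => hyT (Finset.mem_erase.2 ⟨(Finset.mem_erase.1 hy).1, hT⟩))

lemma pick_mem_upc (v : G → ℝ) (S : Finset G) (hS : S.Nonempty) (T : Finset G)
    (hTS : T ⊆ S) (hup : upc v S T) (hT : T.Nonempty) : pick v S hS ∈ T := by
  by_contra hc
  obtain ⟨x, hx⟩ := hT
  exact absurd (pick_max v S hS x (hTS hx))
    (not_le.2 (hup x hx _ (pick_mem v S hS) hc))

lemma rr_guarantee (n : ℕ) (v : Fin n → G → ℝ) (ord : ℕ → Fin n) (i : Fin n) :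
    ∀ (S : Finset G) (j : ℕ) (T : Finset G), T ⊆ S → upc (v i) S T →
      cnt n ord j T.card i ≤ (rr n v ord j S i ∩ T).card := by
  intro S
  induction S using Finset.strongInduction with
  | _ S ih =>
    intro j T hTS hup
    rcases Finset.eq_empty_or_nonempty T with hT | hT
    · subst hT; simp [cnt]
    · have hS : S.Nonempty := hT.mono hTS
      set g := pick (v (ord j)) S hS with hg
      have hgS : g ∈ S := pick_mem _ _ _
      have ihh := ih (S.erase g) (Finset.erase_ssubset hgS) (j+1) (T.erase g)
        (Finset.erase_subset_erase g hTS) (upc_erase _ _ _ hup g)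
      have hcard : 1 ≤ T.card := Finset.card_pos.2 hT
      have hTsub : rr n v ord (j+1) (S.erase g) i ∩ T.erase g
          = rr n v ord (j+1) (S.erase g) i ∩ T := by
        ext x
        simp only [Finset.mem_inter, Finset.mem_erase]
        refine ⟨fun h => ⟨h.1, h.2.2⟩, fun h => ⟨h.1, ⟨?_, h.2⟩⟩⟩
        intro hxg
        apply Finset.notMem_erase g S
        have h2 := rr_subset n v ord (S.erase g) (j+1) i h.1
        rwa [hxg] at h2
      rw [rr_eq_of_nonempty n v ord j S hS]
      by_cases hio : i = ord j
      · -- agent i picks g, and g ∈ T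
        have hgT : g ∈ T := pick_mem_upc _ _ _ _ hTS (hio ▸ hup) hT
        rw [if_pos hio]
        have hTcard : T.card = (T.erase g).card + 1 := by
          rw [Finset.card_erase_of_mem hgT]; omega
        rw [hTcard, cnt_succ, if_pos hio.symm]
        have hgnot : g ∉ rr n v ord (j+1) (S.erase g) i ∩ T :=
          fun h => (Finset.notMem_erase g S)
            (rr_subset n v ord _ _ _ (Finset.mem_inter.1 h).1)
        have : insert g (rr n v ord (j+1) (S.erase g) i) ∩ T
            = insert g (rr n v ord (j+1) (S.erase g) i ∩ T) := by
          rw [Finset.insert_inter_of_mem hgT]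
        rw [this, Finset.card_insert_of_notMem hgnot]
        rw [hTsub] at ihh
        omega
      · rw [if_neg hio]
        obtain ⟨x', hx'⟩ : ∃ x', T.card = x' + 1 := ⟨T.card - 1, by omega⟩
        rw [hx', cnt_succ]
        have hord : ¬ (ord j = i) := fun h => hio h.symm
        rw [if_neg hord]
        have h1 : cnt n ord (j+1) x' i ≤ cnt n ord (j+1) (T.erase g).card i := by
          apply cnt_mono
          have : (T.erase g).card = T.card ∨ (T.erase g).card + 1 = T.card := by
            by_cases hgT : g ∈ T
            · right; rw [Finset.card_erase_of_mem hgT]; omega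
            · left; rw [Finset.erase_eq_of_notMem hgT]
          omega
        rw [hTsub] at ihh
        simpa using le_trans h1 ihh
lemma card_inter_erase_le (X T : Finset G) (g1 : G) :
    (X ∩ T).card ≤ (X.erase g1 ∩ T).card + 1 := by
  have hsub : X ∩ T ⊆ insert g1 (X.erase g1 ∩ T) := by
    intro x hx
    rcases Finset.mem_inter.1 hx with ⟨hx1, hx2⟩
    by_cases hxg : x = g1
    · exact hxg ▸ Finset.mem_insert_self _ _
    · exact Finset.mem_insert_of_mem (Finset.mem_inter.2 ⟨Finset.mem_erase.2 ⟨hxg, hx1⟩, hx2⟩)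
  exact le_trans (Finset.card_le_card hsub) (Finset.card_insert_le _ _)

lemma rr_ef1_aux (n : ℕ) (v : Fin n → G → ℝ) (ord : ℕ → Fin n) (D : Fin n → ℕ → ℕ)
    (hD0 : ∀ a j, D a j = 0 ↔ ord j = a)
    (hDstep : ∀ a j, D a (j+1) = if D a j = 0 then n - 1 else D a j - 1)
    (hDlt : ∀ a j, D a j < n) :
    ∀ (S : Finset G) (j : ℕ) (a b : Fin n), a ≠ b →
      (D a j < D b j →
        ∀ T, T ⊆ S → upc (v a) S T →
          (rr n v ord j S b ∩ T).card ≤ (rr n v ord j S a ∩ T).card) ∧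
      (D b j < D a j →
        (rr n v ord j S b = ∅ ∨ ∃ g ∈ rr n v ord j S b, ∀ T, T ⊆ S → upc (v a) S T →
          ((rr n v ord j S b).erase g ∩ T).card ≤ (rr n v ord j S a ∩ T).card)) := by
  intro S
  induction S using Finset.strongInduction with
  | _ S ih =>
    intro j a b hab
    rcases Finset.eq_empty_or_nonempty S with hSe | hS
    · subst hSe
      simp [rr_empty]
    set g := pick (v (ord j)) S hS with hgdef
    have hgS : g ∈ S := pick_mem _ _ _
    have hss : S.erase g ⊂ S := Finset.erase_ssubset hgS
    have hga' : ∀ i : Fin n, g ∉ rr n v ord (j+1) (S.erase g) i :=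
      fun i h => (Finset.notMem_erase g S) (rr_subset n v ord _ _ _ h)
    have key : ∀ X : Finset G, X ⊆ S.erase g → ∀ T : Finset G,
        X ∩ T.erase g = X ∩ T := by
      intro X hX T
      ext x
      simp only [Finset.mem_inter, Finset.mem_erase]
      refine ⟨fun h => ⟨h.1, h.2.2⟩, fun h => ⟨h.1, ⟨?_, h.2⟩⟩⟩
      intro hxg
      have := hX h.1
      rw [hxg] at this
      exact (Finset.notMem_erase g S) this
    have hn2 : 2 ≤ n := by
      have h1 := a.isLt; have h2 := b.isLt
      have h3 : a.val ≠ b.val := Fin.val_ne_of_ne hab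
      omega
    constructor
    · -- part 1 : D a j < D b j
      intro hlt T hTS hup
      have hbord : b ≠ ord j := by
        intro h
        have : D b j = 0 := (hD0 b j).2 h.symm
        omega
      have hRb : rr n v ord j S b = rr n v ord (j+1) (S.erase g) b := by
        rw [rr_eq_of_nonempty n v ord j S hS, if_neg hbord]
      by_cases hca : a = ord j
      · have hDa0 : D a j = 0 := (hD0 a j).2 hca.symm
        have hDb0 : D b j ≠ 0 := by omega
        have hstepa : D a (j+1) = n - 1 := by rw [hDstep, if_pos hDa0]
        have hstepb : D b (j+1) = D b j - 1 := by rw [hDstep, if_neg hDb0]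
        have hlt' : D b (j+1) < D a (j+1) := by
          have := hDlt b j; omega
        have hRa : rr n v ord j S a =
            insert g (rr n v ord (j+1) (S.erase g) a) := by
          rw [rr_eq_of_nonempty n v ord j S hS, if_pos hca]
        rcases Finset.eq_empty_or_nonempty T with hTe | hTne
        · subst hTe; simp
        have hgT : g ∈ T := by
          rw [hgdef]
          exact pick_mem_upc _ _ _ _ hTS (hca ▸ hup) hTne
        have hup' : upc (v a) (S.erase g) (T.erase g) := upc_erase _ _ _ hup g
        have hT'S' : T.erase g ⊆ S.erase g := Finset.erase_subset_erase g hTS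
        have IH2 := (ih _ hss (j+1) a b hab).2 hlt'
        have hRbcard : (rr n v ord j S b ∩ T).card
            ≤ (rr n v ord (j+1) (S.erase g) a ∩ T.erase g).card + 1 := by
          rw [hRb, ← key _ (rr_subset n v ord _ _ _) T]
          rcases IH2 with h0 | ⟨g1, hg1, hbd⟩
          · rw [h0]; simp
          · have h1 := hbd (T.erase g) hT'S' hup'
            have h2 := card_inter_erase_le (rr n v ord (j+1) (S.erase g) b)
              (T.erase g) g1
            omega
        have hRacard : (rr n v ord j S a ∩ T).card
            = (rr n v ord (j+1) (S.erase g) a ∩ T.erase g).card + 1 := by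
          rw [hRa, Finset.insert_inter_of_mem hgT,
            Finset.card_insert_of_notMem
              (fun h => hga' a (Finset.mem_inter.1 h).1),
            key _ (rr_subset n v ord _ _ _) T]
        omega
      · have hDa0 : D a j ≠ 0 := fun h => hca (((hD0 a j).1 h).symm)
        have hDb0 : D b j ≠ 0 := fun h => hbord (((hD0 b j).1 h).symm)
        have hlt' : D a (j+1) < D b (j+1) := by
          rw [hDstep, hDstep, if_neg hDa0, if_neg hDb0]; omega
        have hRa : rr n v ord j S a = rr n v ord (j+1) (S.erase g) a := by
          rw [rr_eq_of_nonempty n v ord j S hS, if_neg hca]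
        have hup' : upc (v a) (S.erase g) (T.erase g) := upc_erase _ _ _ hup g
        have hT'S' : T.erase g ⊆ S.erase g := Finset.erase_subset_erase g hTS
        have IH1 := (ih _ hss (j+1) a b hab).1 hlt' (T.erase g) hT'S' hup'
        rw [hRa, hRb, ← key _ (rr_subset n v ord _ _ _) T]
        refine le_trans IH1 (Finset.card_le_card ?_)
        rw [key _ (rr_subset n v ord _ _ _) T]
    · -- part 2 : D b j < D a j
      intro hlt
      have haord : a ≠ ord j := by
        intro h
        have : D a j = 0 := (hD0 a j).2 h.symm
        omega
      have hRa : rr n v ord j S a = rr n v ord (j+1) (S.erase g) a := by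
        rw [rr_eq_of_nonempty n v ord j S hS, if_neg haord]
      by_cases hcb : b = ord j
      · have hDb0 : D b j = 0 := (hD0 b j).2 hcb.symm
        have hDa0 : D a j ≠ 0 := by omega
        have hlt' : D a (j+1) < D b (j+1) := by
          rw [hDstep, hDstep, if_pos hDb0, if_neg hDa0]
          have := hDlt a j; omega
        have hRb : rr n v ord j S b =
            insert g (rr n v ord (j+1) (S.erase g) b) := by
          rw [rr_eq_of_nonempty n v ord j S hS, if_pos hcb]
        refine Or.inr ⟨g, by rw [hRb]; exact Finset.mem_insert_self _ _, ?_⟩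
        intro T hTS hup
        have hup' : upc (v a) (S.erase g) (T.erase g) := upc_erase _ _ _ hup g
        have hT'S' : T.erase g ⊆ S.erase g := Finset.erase_subset_erase g hTS
        have IH1 := (ih _ hss (j+1) a b hab).1 hlt' (T.erase g) hT'S' hup'
        have herase : (rr n v ord j S b).erase g
            = rr n v ord (j+1) (S.erase g) b := by
          rw [hRb, Finset.erase_insert (hga' b)]
        rw [herase, hRa, ← key _ (rr_subset n v ord _ _ _) T,
          ← key _ (rr_subset n v ord _ _ _) T]
        exact IH1
      · have hDa0 : D a j ≠ 0 := fun h => haord (((hD0 a j).1 h).symm)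
        have hDb0 : D b j ≠ 0 := fun h => hcb (((hD0 b j).1 h).symm)
        have hlt' : D b (j+1) < D a (j+1) := by
          rw [hDstep, hDstep, if_neg hDa0, if_neg hDb0]; omega
        have hRb : rr n v ord j S b = rr n v ord (j+1) (S.erase g) b := by
          rw [rr_eq_of_nonempty n v ord j S hS, if_neg hcb]
        rcases (ih _ hss (j+1) a b hab).2 hlt' with h0 | ⟨g1, hg1, hbd⟩
        · exact Or.inl (by rw [hRb, h0])
        · refine Or.inr ⟨g1, by rw [hRb]; exact hg1, ?_⟩
          intro T hTS hup
          have hup' : upc (v a) (S.erase g) (T.erase g) := upc_erase _ _ _ hup g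
          have hT'S' : T.erase g ⊆ S.erase g := Finset.erase_subset_erase g hTS
          have IH := hbd (T.erase g) hT'S' hup'
          have hsubX : (rr n v ord (j+1) (S.erase g) b).erase g1 ⊆ S.erase g :=
            (Finset.erase_subset g1 _).trans (rr_subset n v ord _ _ _)
          rw [hRb, hRa, ← key _ hsubX T, ← key _ (rr_subset n v ord _ _ _) T]
          exact IH
lemma two_mod (n a : ℕ) (hn : 0 < n) (h : a < 2*n) :
    a % n = if a < n then a else a - n := by
  split
  · exact Nat.mod_eq_of_lt ‹_›
  · rw [Nat.mod_eq_sub_mod (by omega)]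
    exact Nat.mod_eq_of_lt (by omega)

lemma succ_mod (n m : ℕ) (hn : 0 < n) :
    (m+1) % n = if m % n + 1 = n then 0 else m % n + 1 := by
  have h1 : (m+1) % n = (m % n + 1) % n := by
    conv_lhs => rw [← Nat.mod_add_mod]
  rw [h1]
  have := Nat.mod_lt m hn
  split
  · next h => rw [h, Nat.mod_self]
  · next h => exact Nat.mod_eq_of_lt (by omega)

lemma card_mod_range (n : ℕ) (hn : 0 < n) (p : ℕ) (hp : p < n) :
    ∀ x, ((Finset.range x).filter (fun d => d % n = p)).card
      = x / n + (if p < x % n then 1 else 0) := by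
  intro x
  induction x with
  | zero => simp
  | succ x ihx =>
    rw [Finset.range_add_one, Finset.filter_insert]
    have hblt : x % n < n := Nat.mod_lt x hn
    have hx : n * (x / n) + x % n = x := Nat.div_add_mod x n
    have hsucc : (x+1) % n = if x % n + 1 = n then 0 else x % n + 1 := succ_mod n x hn
    have hdiv : (x+1) / n = if x % n + 1 = n then x / n + 1 else x / n := by
      by_cases hc : x % n + 1 = n
      · rw [if_pos hc]
        have h2 : x + 1 = n * (x / n + 1) := by
          rw [Nat.mul_add, Nat.mul_one]; omega
        rw [h2, Nat.mul_div_cancel_left _ hn]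
      · rw [if_neg hc]
        have h2 : x + 1 = (x % n + 1) + n * (x / n) := by omega
        rw [h2, Nat.add_mul_div_left _ _ hn, Nat.div_eq_of_lt (by omega)]
        omega
    by_cases hxp : x % n = p
    · rw [if_pos hxp, Finset.card_insert_of_notMem (by simp), ihx, hdiv, hsucc]
      split_ifs <;> omega
    · rw [if_neg hxp, ihx, hdiv, hsucc]
      split_ifs <;> omega

lemma count_shift (n : ℕ) (hn : 0 < n) (s : ℕ) (hs : s < n) (c : ℕ) (hc : c < n) (x : ℕ) :
    ((Finset.range x).filter (fun d => (d + s) % n = c)).card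
      = x / n + (if (c + n - s) % n < x % n then 1 else 0) := by
  have heq : ((Finset.range x).filter (fun d => (d + s) % n = c))
      = ((Finset.range x).filter (fun d => d % n = (c + n - s) % n)) := by
    apply Finset.filter_congr
    intro d _
    have hdm : d % n < n := Nat.mod_lt d hn
    rw [Nat.add_mod, Nat.mod_eq_of_lt hs,
      two_mod n (d % n + s) hn (by omega),
      two_mod n (c + n - s) hn (by omega)]
    split_ifs <;> omega
  rw [heq, card_mod_range n hn _ (Nat.mod_lt _ hn) x]

lemma sdlt (n k : ℕ) (hn : 0 < n) (hk : 0 < k) (t j : ℕ) :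
    (t * n / k < j) ↔ t < (j * k + n - 1) / n := by
  rcases Nat.eq_zero_or_pos j with hj | hj
  · subst hj
    have h1 : (0 * k + n - 1) / n = 0 := Nat.div_eq_of_lt (by omega)
    rw [h1]
    simp
  · have h1 : t * n / k < j ↔ t * n < j * k := Nat.div_lt_iff_lt_mul hk
    have h3 : t < (j*k + n - 1)/n ↔ (t+1) * n ≤ j*k + n - 1 := by
      rw [Nat.lt_iff_add_one_le]
      exact Nat.le_div_iff_mul_le hn
    rw [h1, h3, add_mul, one_mul]
    have hjk : 0 < j * k := Nat.mul_pos hj hk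
    generalize hA : t * n = A
    generalize hB : j * k = B
    rw [hB] at hjk
    omega

lemma subA (n i r s : ℕ) (hn : 0 < n) (hi : i < n) (hr : r < n) (hs : s < n)
    (hcase : r ≤ i + 1) :
    ((i + n - s) % n < r) ↔ (i + 1 - r ≤ s ∧ s < i + 1) := by
  rw [two_mod n _ hn (by omega)]
  split_ifs <;> omega

lemma subB (n i r s : ℕ) (hn : 0 < n) (hi : i < n) (hr : r < n) (hs : s < n)
    (hcase : i + 1 < r) :
    ((i + n - s) % n < r) ↔ (s < i + 1 ∨ i + 1 + n - r ≤ s) := by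
  rw [two_mod n _ hn (by omega)]
  split_ifs <;> omega

lemma cdiv_lb (n m : ℕ) (hn : 0 < n) : m ≤ n * ((m + n - 1)/n) := by
  have hdm := Nat.div_add_mod (m + n - 1) n
  have hlt : (m + n - 1) % n < n := Nat.mod_lt _ hn
  generalize hg : n * ((m + n - 1)/n) = P at hdm ⊢
  omega

lemma cdiv_ub (n m : ℕ) (hn : 0 < n) : n * ((m + n - 1)/n) < m + n := by
  have hdm := Nat.div_add_mod (m + n - 1) n
  have hlt : (m + n - 1) % n < n := Nat.mod_lt _ hn
  generalize hg : n * ((m + n - 1)/n) = P at hdm ⊢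
  omega

lemma cdiv_mono (n m m' : ℕ) (h : m ≤ m') : (m + n - 1)/n ≤ (m' + n - 1)/n :=
  Nat.div_le_div_right (by omega)

lemma cdiv_le (n k m : ℕ) (hn : 0 < n) (hm : m ≤ n * k) : (m + n - 1)/n ≤ k := by
  rw [Nat.div_le_iff_le_mul_add_pred hn]
  have h2 : m + n ≤ n * k + n := Nat.add_le_add_right hm n
  generalize hg : n * k = P at h2 ⊢
  omega

lemma interval_count (n k : ℕ) (hn : 0 < n) (hk : 0 < k) (i r : ℕ)
    (hi : i < n) (hr : r < n) :
    k * r ≤ n * (((Finset.range k).filter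
      (fun t => (i + n - (t * n / k)) % n < r)).card + 1) := by
  have hslt : ∀ t, t < k → t * n / k < n := by
    intro t ht
    rw [Nat.div_lt_iff_lt_mul hk]
    calc t * n < k * n := by exact Nat.mul_lt_mul_of_lt_of_le ht (le_refl n) hn
    _ = n * k := Nat.mul_comm k n
  by_cases hcase : r ≤ i + 1
  · set c1 := ((i+1) * k + n - 1)/n with hc1
    set c2 := ((i+1-r) * k + n - 1)/n with hc2
    have hc1k : c1 ≤ k := cdiv_le n k _ hn (Nat.mul_le_mul_right k (by omega))
    have hc21 : c2 ≤ c1 := cdiv_mono n _ _ (Nat.mul_le_mul_right k (by omega))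
    have hceq : (Finset.range k).filter (fun t => (i + n - (t * n / k)) % n < r)
        = Finset.Ico c2 c1 := by
      ext t
      simp only [Finset.mem_filter, Finset.mem_range, Finset.mem_Ico]
      constructor
      · rintro ⟨htk, hcond⟩
        rw [subA n i r _ hn hi hr (hslt t htk) hcase] at hcond
        refine ⟨?_, (sdlt n k hn hk t (i+1)).1 hcond.2⟩
        by_contra hlt
        have h2 := (sdlt n k hn hk t (i+1-r)).2 (Nat.not_le.1 hlt)
        exact absurd h2 (Nat.not_lt.2 hcond.1)
      · rintro ⟨h2, h1⟩
        have htk : t < k := lt_of_lt_of_le h1 hc1k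
        refine ⟨htk, ?_⟩
        rw [subA n i r _ hn hi hr (hslt t htk) hcase]
        refine ⟨?_, (sdlt n k hn hk t (i+1)).2 h1⟩
        by_contra h
        exact absurd ((sdlt n k hn hk t (i+1-r)).1 (Nat.not_le.1 h)) (Nat.not_lt.2 h2)
    rw [hceq, Nat.card_Ico]
    have f1 : (i+1) * k ≤ n * c1 := cdiv_lb n _ hn
    have f2 : n * c2 < (i+1-r) * k + n := cdiv_ub n _ hn
    have f4 : (i+1-r) * k + r * k = (i+1) * k := by
      rw [← Nat.add_mul]
      congr 1
      omega
    have e0 : (c1 - c2 + 1) + c2 = c1 + 1 := by omega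
    have E := congrArg (fun z => n * z) e0
    simp only [Nat.mul_add, Nat.mul_one] at E
    linarith
  · set c1 := ((i+1) * k + n - 1)/n with hc1
    set j3 := i + 1 + n - r with hj3
    set c3 := (j3 * k + n - 1)/n with hc3
    have hj3n : j3 ≤ n := by omega
    have hij3 : i + 1 ≤ j3 := by omega
    have hc1k : c1 ≤ k := cdiv_le n k _ hn (Nat.mul_le_mul_right k (by omega))
    have hc3k : c3 ≤ k := cdiv_le n k _ hn (Nat.mul_le_mul_right k hj3n)
    have hc13 : c1 ≤ c3 := cdiv_mono n _ _ (Nat.mul_le_mul_right k hij3)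
    have hceq : (Finset.range k).filter (fun t => (i + n - (t * n / k)) % n < r)
        = (Finset.range c1) ∪ Finset.Ico c3 k := by
      ext t
      simp only [Finset.mem_filter, Finset.mem_range, Finset.mem_union, Finset.mem_Ico]
      constructor
      · rintro ⟨htk, hcond⟩
        rw [subB n i r _ hn hi hr (hslt t htk) (by omega)] at hcond
        rcases hcond with h | h
        · exact Or.inl ((sdlt n k hn hk t (i+1)).1 h)
        · refine Or.inr ⟨?_, htk⟩
          by_contra hlt
          have h2 := (sdlt n k hn hk t j3).2 (Nat.not_le.1 hlt)
          exact absurd h2 (Nat.not_lt.2 h)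
      · rintro (h | ⟨h3, htk⟩)
        · have htk : t < k := lt_of_lt_of_le h hc1k
          refine ⟨htk, ?_⟩
          rw [subB n i r _ hn hi hr (hslt t htk) (by omega)]
          exact Or.inl ((sdlt n k hn hk t (i+1)).2 h)
        · refine ⟨htk, ?_⟩
          rw [subB n i r _ hn hi hr (hslt t htk) (by omega)]
          refine Or.inr ?_
          by_contra h
          exact absurd ((sdlt n k hn hk t j3).1 (Nat.not_le.1 h)) (Nat.not_lt.2 h3)
    have hdisj : Disjoint (Finset.range c1) (Finset.Ico c3 k) := by
      rw [Finset.disjoint_left]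
      intro t ht ht'
      rw [Finset.mem_range] at ht
      rw [Finset.mem_Ico] at ht'
      omega
    rw [hceq, Finset.card_union_of_disjoint hdisj, Finset.card_range, Nat.card_Ico]
    have f1 : (i+1) * k ≤ n * c1 := cdiv_lb n _ hn
    have f3 : n * c3 < j3 * k + n := cdiv_ub n _ hn
    have f4 : j3 * k + r * k = (i+1) * k + n * k := by
      rw [← Nat.add_mul, ← Nat.add_mul]
      congr 1
      omega
    have e0 : (c1 + (k - c3) + 1) + c3 = c1 + k + 1 := by omega
    have E := congrArg (fun z => n * z) e0
    simp only [Nat.mul_add, Nat.mul_one] at E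
    linarith

lemma main_count (n k : ℕ) (hn : 0 < n) (hk : 0 < k) (i : ℕ) (hi : i < n) (x : ℕ) :
    k * x ≤ n * ((∑ t ∈ Finset.range k,
      (x / n + if (i + n - (t * n / k)) % n < x % n then 1 else 0)) + 1) := by
  have hr : x % n < n := Nat.mod_lt x hn
  have hx : n * (x / n) + x % n = x := Nat.div_add_mod x n
  have hsum : (∑ t ∈ Finset.range k,
      (x / n + if (i + n - (t * n / k)) % n < x % n then 1 else 0))
      = k * (x / n) + ((Finset.range k).filter
        (fun t => (i + n - (t * n / k)) % n < x % n)).card := by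
    rw [Finset.sum_add_distrib, Finset.sum_const, Finset.card_range, smul_eq_mul]
    congr 1
    rw [Finset.card_filter]
  rw [hsum]
  have hIC := interval_count n k hn hk i (x % n) hi hr
  generalize hN : ((Finset.range k).filter
    (fun t => (i + n - (t * n / k)) % n < x % n)).card = N at hIC ⊢
  generalize hq : x / n = q at hx ⊢
  -- goal : k * x ≤ n * (k * q + N + 1)
  have e1 : k * x = k * (n * q) + k * (x % n) := by
    rw [← Nat.mul_add, hx]
  rw [e1]
  have e2 : n * (k * q + N + 1) = n * (k * q) + n * (N + 1) := by ring
  rw [e2]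
  have e3 : k * (n * q) = n * (k * q) := by ring
  rw [e3]
  exact Nat.add_le_add_left hIC _
/-- The picking order on day `t` (out of `k` days): position `p` goes to agent `(p + tn/k) % n`. -/
def ordd (n k : ℕ) (hn : 0 < n) (t : ℕ) : ℕ → Fin n :=
  fun p => ⟨(p + t * n / k) % n, Nat.mod_lt _ hn⟩

/-- Distance from index `j` to the next turn of agent `a` on day `t`. -/
def Df (n k t : ℕ) (a : Fin n) (j : ℕ) : ℕ :=
  if (j + t * n / k) % n ≤ a.val then a.val - (j + t * n / k) % n
  else a.val + n - (j + t * n / k) % n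

lemma Df_zero (n k : ℕ) (hn : 0 < n) (t : ℕ) (a : Fin n) (j : ℕ) :
    Df n k t a j = 0 ↔ ordd n k hn t j = a := by
  unfold Df ordd
  have he : (j + t*n/k) % n < n := Nat.mod_lt _ hn
  have ha := a.isLt
  constructor
  · intro h
    apply Fin.ext
    show (j + t*n/k) % n = a.val
    split_ifs at h <;> omega
  · intro h
    have h2 : (j + t*n/k) % n = a.val := congrArg Fin.val h
    split_ifs <;> omega

lemma Df_step (n k : ℕ) (hn : 0 < n) (t : ℕ) (a : Fin n) (j : ℕ) :
    Df n k t a (j+1) = if Df n k t a j = 0 then n - 1 else Df n k t a j - 1 := by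
  unfold Df
  have he : (j + t*n/k) % n < n := Nat.mod_lt _ hn
  have ha := a.isLt
  have hstep : (j + 1 + t*n/k) % n
      = if (j + t*n/k) % n + 1 = n then 0 else (j + t*n/k) % n + 1 := by
    rw [Nat.add_right_comm j 1 (t*n/k)]
    exact succ_mod n (j + t*n/k) hn
  rw [hstep]
  split_ifs <;> omega

lemma Df_lt (n k : ℕ) (hn : 0 < n) (t : ℕ) (a : Fin n) (j : ℕ) : Df n k t a j < n := by
  unfold Df
  have he : (j + t*n/k) % n < n := Nat.mod_lt _ hn
  have ha := a.isLt
  split_ifs <;> omega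

lemma Df_ne (n k : ℕ) (hn : 0 < n) (t : ℕ) (a b : Fin n) (hab : a ≠ b) (j : ℕ) :
    Df n k t a j ≠ Df n k t b j := by
  unfold Df
  have he : (j + t*n/k) % n < n := Nat.mod_lt _ hn
  have ha := a.isLt
  have hb := b.isLt
  have hv : a.val ≠ b.val := Fin.val_ne_of_ne hab
  split_ifs <;> omega

lemma filter_upc (v : G → ℝ) (c : ℝ) (S : Finset G) :
    upc v S (S.filter (fun h => c ≤ v h)) := by
  intro x hx y hy hyT
  rw [Finset.mem_filter] at hx
  by_contra hle
  push_neg at hle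
  exact hyT (Finset.mem_filter.2 ⟨hy, le_trans hx.2 hle⟩)

lemma day_sdef1 (n k : ℕ) (hn : 0 < n) (v : Fin n → G → ℝ) (t : ℕ) (St : Finset G) :
    SDEF1 n v St (rr n v (ordd n k hn t) 0 St) := by
  intro i j hAj
  by_cases hij : i = j
  · subst hij
    obtain ⟨g, hg⟩ := Finset.nonempty_iff_ne_empty.2 hAj
    exact ⟨g, hg, fun g0 hg0 => Finset.card_le_card
      (Finset.inter_subset_inter (Finset.erase_subset _ _) (Finset.Subset.refl _))⟩
  · have haux := rr_ef1_aux n v (ordd n k hn t) (Df n k t)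
      (fun a jj => Df_zero n k hn t a jj)
      (fun a jj => Df_step n k hn t a jj)
      (fun a jj => Df_lt n k hn t a jj) St 0 i j hij
    have hne := Df_ne n k hn t i j hij 0
    rcases Nat.lt_or_ge (Df n k t i 0) (Df n k t j 0) with hlt | hge
    · obtain ⟨g, hg⟩ := Finset.nonempty_iff_ne_empty.2 hAj
      refine ⟨g, hg, ?_⟩
      intro g0 hg0
      have h1 := haux.1 hlt (topSet (v i) St g0) (Finset.filter_subset _ _)
        (filter_upc (v i) (v i g0) St)
      exact le_trans (Finset.card_le_card
        (Finset.inter_subset_inter (Finset.erase_subset _ _) (Finset.Subset.refl _))) h1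
    · have hgt : Df n k t j 0 < Df n k t i 0 := by omega
      rcases haux.2 hgt with h0 | ⟨g, hg, hbd⟩
      · exact absurd h0 hAj
      · exact ⟨g, hg, fun g0 hg0 => hbd (topSet (v i) St g0)
          (Finset.filter_subset _ _) (filter_upc (v i) (v i g0) St)⟩

lemma cnt_eval (n : ℕ) (hn : 0 < n) (k t : ℕ) (hk : 0 < k) (ht : t < k) (i : Fin n) (x : ℕ) :
    cnt n (ordd n k hn t) 0 x i
      = x / n + (if (i.val + n - t * n / k) % n < x % n then 1 else 0) := by
  have hs : t * n / k < n := by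
    rw [Nat.div_lt_iff_lt_mul hk]
    calc t * n < k * n := (Nat.mul_lt_mul_right hn).2 ht
    _ = n * k := Nat.mul_comm k n
  unfold cnt
  rw [← count_shift n hn (t*n/k) hs i.val i.isLt x]
  apply congrArg Finset.card
  apply Finset.filter_congr
  intro d _
  have e1 : ordd n k hn t (0 + d) = ⟨(d + t * n / k) % n, Nat.mod_lt _ hn⟩ := by
    unfold ordd
    congr 2
    rw [Nat.zero_add]
  rw [e1]
  exact ⟨fun h => (congrArg Fin.val h : _), fun h => Fin.ext h⟩

end TFD

/-- For every temporal fair division instance with identical days,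
there is an allocation that is SD-EF1 per day and SD-PROP1 overall. -/
theorem identical_days_sdef1_perDay_sdprop1_overall
    {G : Type*} [DecidableEq G] (n k : ℕ) (hn : 0 < n)
    (M : Fin k → Finset G)
    (hdisj : ∀ t t' : Fin k, t ≠ t' → Disjoint (M t) (M t'))
    (v : Fin n → G → ℝ)
    (hv : ∀ i : Fin n, ∀ g ∈ Finset.univ.biUnion M, 0 ≤ v i g)
    (hid : ∀ t t' : Fin k, ∃ f : G → G,
      Set.BijOn f ↑(M t) ↑(M t') ∧ ∀ i : Fin n, ∀ g ∈ M t, v i g = v i (f g)) :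
    ∃ A : Fin n → Finset G,
      IsAlloc n (Finset.univ.biUnion M) A ∧
      (∀ t : Fin k, SDEF1 n v (M t) (fun i => A i ∩ M t)) ∧
      SDPROP1 n v (Finset.univ.biUnion M) A := by
  classical
  rcases Nat.eq_zero_or_pos k with hk0 | hk
  · subst hk0
    refine ⟨fun _ => ∅, ⟨fun i j _ => Finset.disjoint_empty_left _, by ext x; simp⟩,
      fun t => t.elim0, ?_⟩
    intro i hAi
    exact absurd (by ext x; simp : (∅ : Finset G) = Finset.univ.biUnion M) hAi
  · refine ⟨fun i => Finset.univ.biUnion (fun t : Fin k =>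
      TFD.rr n v (TFD.ordd n k hn t.val) 0 (M t) i), ⟨?_, ?_⟩, ?_, ?_⟩
    · -- pairwise disjoint
      intro i j hij
      rw [Finset.disjoint_left]
      intro a hai haj
      simp only [Finset.mem_biUnion, Finset.mem_univ, true_and] at hai haj
      obtain ⟨t1, h1⟩ := hai
      obtain ⟨t2, h2⟩ := haj
      rcases eq_or_ne t1 t2 with rfl | hne
      · exact Finset.disjoint_left.1 (TFD.rr_disjoint n v _ (M t1) 0 i j hij) h1 h2
      · exact Finset.disjoint_left.1 (hdisj t1 t2 hne)
          (TFD.rr_subset n v _ (M t1) 0 i h1) (TFD.rr_subset n v _ (M t2) 0 j h2)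
    · -- union is all goods
      ext x
      simp only [Finset.mem_biUnion, Finset.mem_univ, true_and]
      constructor
      · rintro ⟨i, t, hx⟩
        exact ⟨t, TFD.rr_subset n v _ (M t) 0 i hx⟩
      · rintro ⟨t, hx⟩
        have hu := TFD.rr_union n v (TFD.ordd n k hn t.val) hn (M t) 0
        rw [← hu] at hx
        simp only [Finset.mem_biUnion, Finset.mem_univ, true_and] at hx
        obtain ⟨i, hi⟩ := hx
        exact ⟨i, t, hi⟩
    · -- SD-EF1 per day
      intro t
      have hAint : ∀ i : Fin n, (Finset.univ.biUnion (fun t' : Fin k =>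
          TFD.rr n v (TFD.ordd n k hn t'.val) 0 (M t') i)) ∩ M t
          = TFD.rr n v (TFD.ordd n k hn t.val) 0 (M t) i := by
        intro i
        ext x
        simp only [Finset.mem_inter, Finset.mem_biUnion, Finset.mem_univ, true_and]
        constructor
        · rintro ⟨⟨t', hx'⟩, hxM⟩
          rcases eq_or_ne t' t with rfl | hne
          · exact hx'
          · exact absurd hxM (Finset.disjoint_left.1 (hdisj t' t hne)
              (TFD.rr_subset n v _ (M t') 0 i hx'))
        · intro hx
          exact ⟨⟨t, hx⟩, TFD.rr_subset n v _ (M t) 0 i hx⟩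
      intro i j hAj
      have hAj' : TFD.rr n v (TFD.ordd n k hn t.val) 0 (M t) j ≠ ∅ := by
        rw [← hAint j]
        exact hAj
      obtain ⟨g, hg, hsd⟩ := TFD.day_sdef1 n k hn v t.val (M t) i j hAj'
      refine ⟨g, ?_, ?_⟩
      · simp only [hAint]
        exact hg
      · simp only [hAint]
        exact hsd
    · -- SD-PROP1 overall
      intro i hAiS
      simp only [] at hAiS ⊢
      have hAsub : (Finset.univ.biUnion (fun t : Fin k =>
          TFD.rr n v (TFD.ordd n k hn t.val) 0 (M t) i)) ⊆ Finset.univ.biUnion M := by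
        intro x hx
        simp only [Finset.mem_biUnion, Finset.mem_univ, true_and] at hx ⊢
        obtain ⟨t, ht⟩ := hx
        exact ⟨t, TFD.rr_subset n v _ (M t) 0 i ht⟩
      have hex : ((Finset.univ.biUnion M) \ (Finset.univ.biUnion (fun t : Fin k =>
          TFD.rr n v (TFD.ordd n k hn t.val) 0 (M t) i))).Nonempty := by
        rw [Finset.sdiff_nonempty]
        intro hcon
        exact hAiS (Finset.Subset.antisymm hAsub hcon)
      refine ⟨TFD.pick (v i) _ hex, TFD.pick_mem _ _ _, ?_⟩
      intro g' hg'
      have hcardT : ∀ t : Fin k, ((M t).filter (fun h => v i g' ≤ v i h)).card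
          = ((M ⟨0, hk⟩).filter (fun h => v i g' ≤ v i h)).card := by
        intro t
        obtain ⟨f, hbij, hval⟩ := hid t ⟨0, hk⟩
        apply Finset.card_bij (fun a _ => f a)
        · intro a ha
          rw [Finset.mem_filter] at ha ⊢
          refine ⟨hbij.mapsTo ha.1, ?_⟩
          rw [← hval i a ha.1]
          exact ha.2
        · intro a1 ha1 a2 ha2 heq
          exact hbij.injOn (Finset.mem_coe.2 (Finset.mem_filter.1 ha1).1)
            (Finset.mem_coe.2 (Finset.mem_filter.1 ha2).1) heq
        · intro b hb
          rw [Finset.mem_filter] at hb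
          obtain ⟨a, ha, hfa⟩ := hbij.surjOn (Finset.mem_coe.2 hb.1)
          have haM : a ∈ M t := ha
          refine ⟨a, Finset.mem_filter.2 ⟨haM, ?_⟩, hfa⟩
          rw [hval i a haM, hfa]
          exact hb.2
      set x0 := ((M ⟨0, hk⟩).filter (fun h => v i g' ≤ v i h)).card with hx0def
      have hHT : topSet (v i) (Finset.univ.biUnion M) g'
          = Finset.univ.biUnion (fun t => (M t).filter (fun h => v i g' ≤ v i h)) := by
        show (Finset.univ.biUnion M).filter _ = _
        exact Finset.filter_biUnion _ _ _
      have hHcard : (topSet (v i) (Finset.univ.biUnion M) g').card = k * x0 := by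
        rw [hHT, Finset.card_biUnion (fun t1 _ t2 _ hne =>
          Finset.disjoint_filter_filter (hdisj t1 t2 hne))]
        rw [Finset.sum_congr rfl (fun t _ => hcardT t), Finset.sum_const,
          Finset.card_univ, Fintype.card_fin, smul_eq_mul]
      have hAiH : (Finset.univ.biUnion (fun t : Fin k =>
            TFD.rr n v (TFD.ordd n k hn t.val) 0 (M t) i))
            ∩ topSet (v i) (Finset.univ.biUnion M) g'
          = Finset.univ.biUnion (fun t : Fin k =>
            TFD.rr n v (TFD.ordd n k hn t.val) 0 (M t) i
              ∩ (M t).filter (fun h => v i g' ≤ v i h)) := by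
        rw [hHT]
        ext x
        simp only [Finset.mem_inter, Finset.mem_biUnion, Finset.mem_univ, true_and]
        constructor
        · rintro ⟨⟨t1, h1⟩, t2, h2⟩
          rcases eq_or_ne t1 t2 with rfl | hne
          · exact ⟨t1, h1, h2⟩
          · exact absurd (Finset.filter_subset _ _ h2)
              ((Finset.disjoint_left.1 (hdisj t1 t2 hne)
                (TFD.rr_subset n v _ (M t1) 0 i h1)))
        · rintro ⟨t, h1, h2⟩
          exact ⟨⟨t, h1⟩, t, h2⟩
      have hsum : ∑ t : Fin k, (TFD.rr n v (TFD.ordd n k hn t.val) 0 (M t) i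
            ∩ (M t).filter (fun h => v i g' ≤ v i h)).card
          = ((Finset.univ.biUnion (fun t : Fin k =>
            TFD.rr n v (TFD.ordd n k hn t.val) 0 (M t) i))
            ∩ topSet (v i) (Finset.univ.biUnion M) g').card := by
        rw [hAiH]
        refine (Finset.card_biUnion ?_).symm
        intro t1 _ t2 _ hne
        refine Finset.disjoint_left.2 (fun x h1 h2 => ?_)
        exact Finset.disjoint_left.1 (hdisj t1 t2 hne)
          (TFD.rr_subset n v _ (M t1) 0 i (Finset.mem_inter.1 h1).1)
          (Finset.filter_subset _ _ (Finset.mem_inter.1 h2).2)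
      have hlow : ∀ t : Fin k,
          x0 / n + (if (i.val + n - t.val * n / k) % n < x0 % n then 1 else 0)
          ≤ (TFD.rr n v (TFD.ordd n k hn t.val) 0 (M t) i
              ∩ (M t).filter (fun h => v i g' ≤ v i h)).card := by
        intro t
        have h1 := TFD.rr_guarantee n v (TFD.ordd n k hn t.val) i (M t) 0
          ((M t).filter (fun h => v i g' ≤ v i h)) (Finset.filter_subset _ _)
          (TFD.filter_upc (v i) (v i g') (M t))
        rw [hcardT t] at h1
        exact le_trans (le_of_eq (TFD.cnt_eval n hn k t.val hk t.isLt i x0).symm) h1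
      have htotal : ∑ t ∈ Finset.range k,
          (x0 / n + if (i.val + n - t * n / k) % n < x0 % n then 1 else 0)
          ≤ ((Finset.univ.biUnion (fun t : Fin k =>
            TFD.rr n v (TFD.ordd n k hn t.val) 0 (M t) i))
            ∩ topSet (v i) (Finset.univ.biUnion M) g').card := by
        rw [← hsum, ← Fin.sum_univ_eq_sum_range (fun t =>
          x0 / n + if (i.val + n - t * n / k) % n < x0 % n then 1 else 0) k]
        exact Finset.sum_le_sum (fun t _ => hlow t)
      have hmain := TFD.main_count n k hn hk i.val i.isLt x0
      by_cases hcase : v i g' ≤ v i (TFD.pick (v i) _ hex)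
      · have hgH : TFD.pick (v i) _ hex ∈ topSet (v i) (Finset.univ.biUnion M) g' :=
          Finset.mem_filter.2 ⟨(Finset.mem_sdiff.1 (TFD.pick_mem _ _ hex)).1, hcase⟩
        have hgA : TFD.pick (v i) _ hex ∉ (Finset.univ.biUnion (fun t : Fin k =>
            TFD.rr n v (TFD.ordd n k hn t.val) 0 (M t) i)) :=
          (Finset.mem_sdiff.1 (TFD.pick_mem _ _ hex)).2
        have hcard2 : (insert (TFD.pick (v i) _ hex)
              (Finset.univ.biUnion (fun t : Fin k =>
                TFD.rr n v (TFD.ordd n k hn t.val) 0 (M t) i))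
              ∩ topSet (v i) (Finset.univ.biUnion M) g').card
            = ((Finset.univ.biUnion (fun t : Fin k =>
                TFD.rr n v (TFD.ordd n k hn t.val) 0 (M t) i))
              ∩ topSet (v i) (Finset.univ.biUnion M) g').card + 1 := by
          rw [Finset.insert_inter_of_mem hgH,
            Finset.card_insert_of_notMem (fun h => hgA (Finset.mem_inter.1 h).1)]
        rw [hcard2, hHcard]
        apply Nat.ceil_le.2
        rw [div_le_iff₀ (show (0:ℚ) < n by exact_mod_cast hn)]
        have h2 : k * x0 ≤ (((Finset.univ.biUnion (fun t : Fin k =>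
            TFD.rr n v (TFD.ordd n k hn t.val) 0 (M t) i))
            ∩ topSet (v i) (Finset.univ.biUnion M) g').card + 1) * n := by
          calc k * x0 ≤ n * ((∑ t ∈ Finset.range k,
              (x0 / n + if (i.val + n - t * n / k) % n < x0 % n then 1 else 0)) + 1) := hmain
          _ ≤ n * (((Finset.univ.biUnion (fun t : Fin k =>
              TFD.rr n v (TFD.ordd n k hn t.val) 0 (M t) i))
              ∩ topSet (v i) (Finset.univ.biUnion M) g').card + 1) :=
            Nat.mul_le_mul (le_refl n) (Nat.add_le_add_right htotal 1)
          _ = _ := Nat.mul_comm _ _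
        exact_mod_cast h2
      · have hHA : topSet (v i) (Finset.univ.biUnion M) g'
            ⊆ insert (TFD.pick (v i) _ hex) (Finset.univ.biUnion (fun t : Fin k =>
              TFD.rr n v (TFD.ordd n k hn t.val) 0 (M t) i)) := by
          intro h hh
          have hh2 := Finset.mem_filter.1 hh
          by_cases hmem : h ∈ Finset.univ.biUnion (fun t : Fin k =>
              TFD.rr n v (TFD.ordd n k hn t.val) 0 (M t) i)
          · exact Finset.mem_insert_of_mem hmem
          · exfalso
            have h3 := TFD.pick_max (v i) _ hex h (Finset.mem_sdiff.2 ⟨hh2.1, hmem⟩)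
            exact hcase (le_trans hh2.2 h3)
        have h1 : (topSet (v i) (Finset.univ.biUnion M) g').card
            ≤ (insert (TFD.pick (v i) _ hex) (Finset.univ.biUnion (fun t : Fin k =>
                TFD.rr n v (TFD.ordd n k hn t.val) 0 (M t) i))
              ∩ topSet (v i) (Finset.univ.biUnion M) g').card :=
          Finset.card_le_card (fun y hy => Finset.mem_inter.2 ⟨hHA hy, hy⟩)
        refine le_trans ?_ h1
        apply Nat.ceil_le.2
        rw [div_le_iff₀ (show (0:ℚ) < n by exact_mod_cast hn)]
        have hn1 : (1:ℚ) ≤ n := by exact_mod_cast hn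
        nlinarith [show (0:ℚ) ≤ ((topSet (v i) (Finset.univ.biUnion M) g').card : ℚ)
          from by positivity]
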